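/- arXiv:2301.01716 — 2 statements merged into one kernel-verified Lean document; each statement's English description precedes it below -/
import Mathlib

section
/- Assume f̃ is L_f̃-Lipschitz on X × Y and the Slater condition holds with constant G > 0. Let ρ, μ, ε > 0, L_f ≥ 0, and let (xε, yε) ∈ X × Y satisfy ‖[g̃(xε,yε)]₊‖ ≤ (2μG)⁻¹ D_Y ( ρ⁻¹ε + ρ⁻¹L_f + L_f̃ ). Then |f̃(xε,yε) − f̃*(xε)| ≤ max{ ρ⁻¹( sup_{z∈Y} P_{ρ,μ}(xε,yε,z) − f_low ), (2μ)⁻¹ G⁻² D_Y² L_f̃ ( ρ⁻¹ε + ρ⁻¹L_f + L_f̃ ) }. -/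
noncomputable section

open Set

open scoped RealInnerProductSpace

/-- Euclidean space `ℝⁿ`. -/
abbrev En (n : ℕ) := EuclideanSpace ℝ (Fin n)

/-- Componentwise positive part `[v]₊` of a vector `v ∈ ℝˡ`. -/
def posPart {l : ℕ} (v : En l) : En l := WithLp.toLp 2 (fun i => max (v i) 0)

/-- The Euclidean distance `‖(x,y) − (x',y')‖` on `ℝⁿ × ℝᵐ`. -/
def prodDist {n m : ℕ} (p q : En n × En m) : ℝ :=
  Real.sqrt (‖p.1 - q.1‖ ^ 2 + ‖p.2 - q.2‖ ^ 2)

/-- `φ` is `L`-Lipschitz on `X × Y` (with the Euclidean norm on `ℝⁿ × ℝᵐ`). -/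
def LipOnXY {n m : ℕ} (φ : En n × En m → ℝ) (L : ℝ)
    (X : Set (En n)) (Y : Set (En m)) : Prop :=
  ∀ p ∈ X ×ˢ Y, ∀ q ∈ X ×ˢ Y, |φ p - φ q| ≤ L * prodDist p q

/-- The Slater condition with constant `G`. -/
def Slater {n m l : ℕ} (gt : En n × En m → En l) (X : Set (En n)) (Y : Set (En m))
    (G : ℝ) : Prop :=
  ∀ x ∈ X, ∃ zhat ∈ Y, ∀ i, gt (x, zhat) i ≤ -G

/-- The lower-level value function `f̃*(x) = inf { f̃(x,z) : z ∈ Y, g̃(x,z) ≤ 0 }`. -/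
def ftStar {n m l : ℕ} (ft : En n × En m → ℝ) (gt : En n × En m → En l)
    (Y : Set (En m)) (x : En n) : ℝ :=
  sInf {v | ∃ z ∈ Y, (∀ i, gt (x, z) i ≤ 0) ∧ v = ft (x, z)}

/-- `f̃*_hi = sup_{x ∈ X} f̃*(x)`. -/
def ftStarHi {n m l : ℕ} (ft : En n × En m → ℝ) (gt : En n × En m → En l)
    (X : Set (En n)) (Y : Set (En m)) : ℝ :=
  sSup {v | ∃ x ∈ X, v = ftStar ft gt Y x}

/-- `f̃_low = inf { f̃(x,y) : (x,y) ∈ X × Y }`. -/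
def ftLow {n m : ℕ} (ft : En n × En m → ℝ) (X : Set (En n)) (Y : Set (En m)) : ℝ :=
  sInf {v | ∃ x ∈ X, ∃ y ∈ Y, v = ft (x, y)}

/-- `f̃_hi = sup { f̃(x,y) : (x,y) ∈ X × Y }`. -/
def ftHi {n m : ℕ} (ft : En n × En m → ℝ) (X : Set (En n)) (Y : Set (En m)) : ℝ :=
  sSup {v | ∃ x ∈ X, ∃ y ∈ Y, v = ft (x, y)}

/-- `f_low = inf { f(x,y) : (x,y) ∈ X × Y }`. -/
def fLow {n m : ℕ} (f : En n × En m → ℝ) (X : Set (En n)) (Y : Set (En m)) : ℝ :=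
  sInf {v | ∃ x ∈ X, ∃ y ∈ Y, v = f (x, y)}

/-- `g̃_hi = sup { ‖g̃(x,y)‖ : (x,y) ∈ X × Y }`. -/
def gtHi {n m l : ℕ} (gt : En n × En m → En l) (X : Set (En n)) (Y : Set (En m)) : ℝ :=
  sSup {v | ∃ x ∈ X, ∃ y ∈ Y, v = ‖gt (x, y)‖}

/-- The lower-level penalty function `P̃_μ(x,z) = f̃(x,z) + μ ‖[g̃(x,z)]₊‖²`. -/
def Ptilde {n m l : ℕ} (ft : En n × En m → ℝ) (gt : En n × En m → En l)
    (μ : ℝ) (x : En n) (z : En m) : ℝ :=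
  ft (x, z) + μ * ‖posPart (gt (x, z))‖ ^ 2

/-- `inf_{z ∈ Y} P̃_μ(x,z)`. -/
def PtildeMinVal {n m l : ℕ} (ft : En n × En m → ℝ) (gt : En n × En m → En l)
    (Y : Set (En m)) (μ : ℝ) (x : En n) : ℝ :=
  sInf {w | ∃ z ∈ Y, w = Ptilde ft gt μ x z}

/-- The minimax penalty function `P_{ρ,μ}(x,y,z) = f(x,y) + ρ (P̃_μ(x,y) − P̃_μ(x,z))`. -/
def Prhomu {n m l : ℕ} (f ft : En n × En m → ℝ) (gt : En n × En m → En l)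
    (ρ μ : ℝ) (x : En n) (y z : En m) : ℝ :=
  f (x, y) + ρ * (Ptilde ft gt μ x y - Ptilde ft gt μ x z)

/-- `sup_{z ∈ Y} P_{ρ,μ}(x,y,z)`. -/
def maxPc {n m l : ℕ} (f ft : En n × En m → ℝ) (gt : En n × En m → En l)
    (Y : Set (En m)) (ρ μ : ℝ) (x : En n) (y : En m) : ℝ :=
  sSup {v | ∃ z ∈ Y, v = Prhomu f ft gt ρ μ x y z}

/-- `inf_{(x,y)∈X×Y} sup_{z∈Y} P_{ρ,μ}(x,y,z)`. -/
def minimaxValc {n m l : ℕ} (f ft : En n × En m → ℝ) (gt : En n × En m → En l)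
    (X : Set (En n)) (Y : Set (En m)) (ρ μ : ℝ) : ℝ :=
  sInf {v | ∃ x ∈ X, ∃ y ∈ Y, v = maxPc f ft gt Y ρ μ x y}

/-- `(x,y,z)` is an ε-optimal solution of `min_{(x,y)∈X×Y} max_{z∈Y} P_{ρ,μ}(x,y,z)`. -/
def epsOptimalc {n m l : ℕ} (f ft : En n × En m → ℝ) (gt : En n × En m → En l)
    (X : Set (En n)) (Y : Set (En m)) (ρ μ ε : ℝ) (x : En n) (y z : En m) : Prop :=
  maxPc f ft gt Y ρ μ x y - Prhomu f ft gt ρ μ x y z ≤ ε ∧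
  Prhomu f ft gt ρ μ x y z - minimaxValc f ft gt X Y ρ μ ≤ ε

/-- The constrained bilevel optimal value
`f* = inf { f(x,y) : x ∈ X, y ∈ Y, g̃(x,y) ≤ 0, f̃(x,y) = f̃*(x) }`. -/
def fStarC {n m l : ℕ} (f ft : En n × En m → ℝ) (gt : En n × En m → En l)
    (X : Set (En n)) (Y : Set (En m)) : ℝ :=
  sInf {v | ∃ x ∈ X, ∃ y ∈ Y,
    (∀ i, gt (x, y) i ≤ 0) ∧ ft (x, y) = ftStar ft gt Y x ∧ v = f (x, y)}

/-- The penalized bilevel optimal value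
`f*_μ = inf { f(x,y) : x ∈ X, y ∈ Y, P̃_μ(x,y) = inf_{z∈Y} P̃_μ(x,z) }`. -/
def fStarMu {n m l : ℕ} (f ft : En n × En m → ℝ) (gt : En n × En m → En l)
    (X : Set (En n)) (Y : Set (En m)) (μ : ℝ) : ℝ :=
  sInf {v | ∃ x ∈ X, ∃ y ∈ Y, Ptilde ft gt μ x y = PtildeMinVal ft gt Y μ x ∧ v = f (x, y)}

/-- The set `S_θ(x)` of θ-approximately feasible lower-level minimizers. -/
def Sθ {n m l : ℕ} (ft : En n × En m → ℝ) (gt : En n × En m → En l)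
    (Y : Set (En m)) (θ : ℝ) (x : En n) : Set (En m) :=
  {z | z ∈ Y ∧ ‖posPart (gt (x, z))‖ ≤ θ ∧
    ft (x, z) = sInf {w | ∃ z' ∈ Y, ‖posPart (gt (x, z'))‖ ≤ θ ∧ w = ft (x, z')}}

/-- The error-bound assumption with constants `θbar` and function `ω`. -/
def ErrorBound {n m l : ℕ} (ft : En n × En m → ℝ) (gt : En n × En m → En l)
    (X : Set (En n)) (Y : Set (En m)) (θbar : ℝ) (ω : ℝ → ℝ) : Prop :=
  0 < θbar ∧ (∀ t, 0 ≤ t → 0 ≤ ω t) ∧ (∀ a b, 0 ≤ a → a ≤ b → ω a ≤ ω b) ∧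
    Filter.Tendsto ω (nhdsWithin 0 (Set.Ioi 0)) (nhds 0) ∧
    ∀ x ∈ X, ∀ z ∈ Sθ ft gt Y 0 x, ∀ θ ∈ Set.Icc 0 θbar,
      Metric.infDist z (Sθ ft gt Y θ x) ≤ ω θ

lemma coord_le_norm' {l : ℕ} (v : En l) (i : Fin l) : v i ≤ ‖v‖ := by
  have h : ‖v‖ = Real.sqrt (∑ j, ‖v j‖ ^ 2) := EuclideanSpace.norm_eq v
  have h2 : ‖v i‖ ^ 2 ≤ ∑ j, ‖v j‖ ^ 2 :=
    Finset.single_le_sum (f := fun j => ‖v j‖ ^ 2) (fun j _ => sq_nonneg _)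
      (Finset.mem_univ i)
  calc v i ≤ |v i| := le_abs_self _
    _ = Real.sqrt (‖v i‖ ^ 2) := by
        rw [Real.sqrt_sq_eq_abs, Real.norm_eq_abs, abs_abs]
    _ ≤ Real.sqrt (∑ j, ‖v j‖ ^ 2) := Real.sqrt_le_sqrt h2
    _ = ‖v‖ := h.symm

set_option maxHeartbeats 1600000 in
theorem stmt16 {n m l : ℕ} (hn : 0 < n) (hm : 0 < m) (hl : 0 < l)
    (X : Set (En n)) (Y : Set (En m))
    (hXne : X.Nonempty) (hXcpt : IsCompact X)
    (hYne : Y.Nonempty) (hYcpt : IsCompact Y) (hYconv : Convex ℝ Y)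
    (f ft : En n × En m → ℝ) (gt : En n × En m → En l)
    (hfc : ContinuousOn f (X ×ˢ Y)) (hftc : ContinuousOn ft (X ×ˢ Y))
    (hgtc : ContinuousOn gt (X ×ˢ Y))
    (hftconv : ∀ x ∈ X, ConvexOn ℝ Y fun z => ft (x, z))
    (hgtconv : ∀ x ∈ X, ∀ i, ConvexOn ℝ Y fun z => gt (x, z) i)
    (hfeas : ∀ x ∈ X, ∃ z ∈ Y, ∀ i, gt (x, z) i ≤ 0)
    (Lft G : ℝ) (hLft : 0 ≤ Lft) (hG : 0 < G)
    (hLipft : LipOnXY ft Lft X Y)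
    (hslater : Slater gt X Y G)
    (ρ μ ε : ℝ) (hρ : 0 < ρ) (hμ : 0 < μ) (hε : 0 < ε)
    (Lf : ℝ) (hLf : 0 ≤ Lf)
    (xe : En n) (hxe : xe ∈ X) (ye : En m) (hye : ye ∈ Y)
    (hg : ‖posPart (gt (xe, ye))‖ ≤
      (2 * μ * G)⁻¹ * Metric.diam Y * (ρ⁻¹ * ε + ρ⁻¹ * Lf + Lft)) :
    |ft (xe, ye) - ftStar ft gt Y xe| ≤
      max (ρ⁻¹ * (maxPc f ft gt Y ρ μ xe ye - fLow f X Y))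
        ((2 * μ)⁻¹ * G⁻¹ ^ 2 * Metric.diam Y ^ 2 * Lft * (ρ⁻¹ * ε + ρ⁻¹ * Lf + Lft)) := by
  classical
  set D := Metric.diam Y with hDdef
  set E := ρ⁻¹ * ε + ρ⁻¹ * Lf + Lft with hEdef
  have hEpos : 0 < E := by
    have : 0 < ρ⁻¹ * ε := by positivity
    have h2 : 0 ≤ ρ⁻¹ * Lf := by positivity
    simp only [hEdef]; linarith
  have hD0 : 0 ≤ D := Metric.diam_nonneg
  set θ := ‖posPart (gt (xe, ye))‖ with hθdef
  have hθ0 : 0 ≤ θ := norm_nonneg _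
  clear_value D E θ
  have hdiam : ∀ z ∈ Y, ∀ z' ∈ Y, ‖z - z'‖ ≤ D := by
    intro z hz z' hz'
    rw [← dist_eq_norm, hDdef]
    exact Metric.dist_le_diam_of_mem hYcpt.isBounded hz hz'
  have lip : ∀ z ∈ Y, ∀ z' ∈ Y, |ft (xe, z) - ft (xe, z')| ≤ Lft * ‖z - z'‖ := by
    intro z hz z' hz'
    have hpd : prodDist (xe, z) (xe, z') = ‖z - z'‖ := by
      simp only [prodDist, sub_self, norm_zero]
      rw [show (0:ℝ) ^ 2 + ‖z - z'‖ ^ 2 = ‖z - z'‖ ^ 2 by ring]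
      exact Real.sqrt_sq (norm_nonneg _)
    have := hLipft (xe, z) ⟨hxe, hz⟩ (xe, z') ⟨hxe, hz'⟩
    rwa [hpd] at this
  have lipD : ∀ z ∈ Y, ft (xe, ye) - Lft * D ≤ ft (xe, z) := by
    intro z hz
    have h1 := lip z hz ye hye
    have h2 : Lft * ‖z - ye‖ ≤ Lft * D :=
      mul_le_mul_of_nonneg_left (hdiam z hz ye hye) hLft
    have := abs_le.mp h1
    linarith [this.1]
  -- feasible-value set
  have hfeas_ne : {v | ∃ z ∈ Y, (∀ i, gt (xe, z) i ≤ 0) ∧ v = ft (xe, z)}.Nonempty := by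
    obtain ⟨z, hz, hzf⟩ := hfeas xe hxe
    exact ⟨ft (xe, z), z, hz, hzf, rfl⟩
  have hfeas_bdd : BddBelow {v | ∃ z ∈ Y, (∀ i, gt (xe, z) i ≤ 0) ∧ v = ft (xe, z)} := by
    refine ⟨ft (xe, ye) - Lft * D, ?_⟩
    rintro v ⟨z, hz, -, rfl⟩
    exact lipD z hz
  have hPtilde_ye : ft (xe, ye) ≤ Ptilde ft gt μ xe ye := by
    have : 0 ≤ μ * ‖posPart (gt (xe, ye))‖ ^ 2 := by positivity
    simp only [Ptilde]; linarith
  have hPtilde_feas : ∀ z, (∀ i, gt (xe, z) i ≤ 0) → Ptilde ft gt μ xe z = ft (xe, z) := by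
    intro z hzf
    have hpp : posPart (gt (xe, z)) = 0 := by
      ext i
      exact max_eq_right (hzf i)
    simp [Ptilde, hpp]
  -- Upper bound part: ft(xe,ye) - ftStar ≤ A
  have hmax_bdd : BddAbove {v | ∃ z ∈ Y, v = Prhomu f ft gt ρ μ xe ye z} := by
    refine ⟨f (xe, ye) + ρ * (Ptilde ft gt μ xe ye - (ft (xe, ye) - Lft * D)), ?_⟩
    rintro v ⟨z, hz, rfl⟩
    have h1 : ft (xe, ye) - Lft * D ≤ Ptilde ft gt μ xe z := by
      have : 0 ≤ μ * ‖posPart (gt (xe, z))‖ ^ 2 := by positivity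
      have := lipD z hz
      simp only [Ptilde]; linarith
    simp only [Prhomu]
    nlinarith [hρ.le]
  have hflow : fLow f X Y ≤ f (xe, ye) := by
    have hset : {v | ∃ x ∈ X, ∃ y ∈ Y, v = f (x, y)} = f '' (X ×ˢ Y) := by
      ext v
      constructor
      · rintro ⟨x, hx, y, hy, rfl⟩; exact ⟨(x, y), ⟨hx, hy⟩, rfl⟩
      · rintro ⟨⟨x, y⟩, ⟨hx, hy⟩, rfl⟩; exact ⟨x, hx, y, hy, rfl⟩
    have hbdd : BddBelow {v | ∃ x ∈ X, ∃ y ∈ Y, v = f (x, y)} := by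
      rw [hset]
      exact ((hXcpt.prod hYcpt).image_of_continuousOn hfc).bddBelow
    exact csInf_le hbdd ⟨xe, hxe, ye, hye, rfl⟩
  have hρinv : ρ * ρ⁻¹ = 1 := mul_inv_cancel₀ hρ.ne'
  have hupper : ft (xe, ye) - ftStar ft gt Y xe ≤
      ρ⁻¹ * (maxPc f ft gt Y ρ μ xe ye - fLow f X Y) := by
    have hstar : ft (xe, ye) - ρ⁻¹ * (maxPc f ft gt Y ρ μ xe ye - fLow f X Y) ≤
        ftStar ft gt Y xe := by
      apply le_csInf hfeas_ne
      rintro v ⟨z, hz, hzf, rfl⟩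
      have hle : Prhomu f ft gt ρ μ xe ye z ≤ maxPc f ft gt Y ρ μ xe ye :=
        le_csSup hmax_bdd ⟨z, hz, rfl⟩
      have hkey : f (xe, ye) + ρ * (ft (xe, ye) - ft (xe, z)) ≤
          maxPc f ft gt Y ρ μ xe ye := by
        have h1 : ρ * (ft (xe, ye) - ft (xe, z)) ≤
            ρ * (Ptilde ft gt μ xe ye - Ptilde ft gt μ xe z) := by
          rw [hPtilde_feas z hzf]
          nlinarith [hρ.le]
        simp only [Prhomu] at hle
        linarith
      have h3 : ρ * (ft (xe, ye) - ft (xe, z)) ≤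
          maxPc f ft gt Y ρ μ xe ye - fLow f X Y := by linarith
      have h4 := mul_le_mul_of_nonneg_left h3 (inv_nonneg.mpr hρ.le)
      rw [← mul_assoc, inv_mul_cancel₀ hρ.ne', one_mul] at h4
      linarith
    linarith [hstar]
  -- Lower bound part
  obtain ⟨zh, hzh, hzhG⟩ := hslater xe hxe
  set t := θ / (θ + G) with htdef
  clear_value t
  have hθG : 0 < θ + G := by linarith
  have ht0 : 0 ≤ t := by rw [htdef]; exact div_nonneg hθ0 hθG.le
  have ht1 : t ≤ 1 := by
    rw [htdef, div_le_one hθG]; linarith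
  obtain ⟨zt, hztdef⟩ : ∃ w : En m, w = (1 - t) • ye + t • zh := ⟨_, rfl⟩
  have hzt : zt ∈ Y := by
    rw [hztdef]; exact hYconv hye hzh (by linarith) ht0 (by ring)
  have hztfeas : ∀ i, gt (xe, zt) i ≤ 0 := by
    intro i
    have hcv := (hgtconv xe hxe i).2 hye hzh (by linarith : (0:ℝ) ≤ 1 - t) ht0 (by ring)
    have hgθ : gt (xe, ye) i ≤ θ := by
      have h1 : gt (xe, ye) i ≤ posPart (gt (xe, ye)) i := by
        unfold _root_.posPart; exact le_max_left _ _
      have h2 : posPart (gt (xe, ye)) i ≤ ‖posPart (gt (xe, ye))‖ :=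
        coord_le_norm' _ i
      linarith
    have hG2 : gt (xe, zh) i ≤ -G := hzhG i
    have hc : (1 - t) * gt (xe, ye) i + t * gt (xe, zh) i ≤ (1 - t) * θ + t * (-G) := by
      have := mul_le_mul_of_nonneg_left hgθ (by linarith : (0:ℝ) ≤ 1 - t)
      have := mul_le_mul_of_nonneg_left hG2 ht0
      linarith
    have hzero : (1 - t) * θ + t * (-G) = 0 := by
      have : t * (θ + G) = θ := by
        rw [htdef, div_mul_cancel₀ _ hθG.ne']
      nlinarith
    rw [← hztdef] at hcv
    have hcv' : gt (xe, zt) i ≤ (1 - t) * gt (xe, ye) i + t * gt (xe, zh) i := by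
      simpa only [smul_eq_mul] using hcv
    exact le_trans hcv' (le_trans hc (le_of_eq hzero))
  have hnorm_zt : ‖zt - ye‖ = t * ‖zh - ye‖ := by
    have hsub : zt - ye = t • (zh - ye) := by
      rw [hztdef]; module
    rw [hsub, norm_smul, Real.norm_eq_abs, abs_of_nonneg ht0]
  have htθG : t ≤ θ / G := by
    rw [htdef, div_le_div_iff₀ hθG hG]
    exact mul_le_mul_of_nonneg_left (by linarith) hθ0
  have hztye : ‖zt - ye‖ ≤ (θ / G) * D := by
    rw [hnorm_zt]
    have h1 : ‖zh - ye‖ ≤ D := hdiam zh hzh ye hye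
    have h2 : t * ‖zh - ye‖ ≤ t * D := mul_le_mul_of_nonneg_left h1 ht0
    have h3 : t * D ≤ (θ / G) * D := mul_le_mul_of_nonneg_right htθG hD0
    linarith only [h2, h3]
  have hstar_le : ftStar ft gt Y xe ≤ ft (xe, zt) :=
    csInf_le hfeas_bdd ⟨zt, hzt, hztfeas, rfl⟩
  have hlip2 : ft (xe, zt) ≤ ft (xe, ye) + Lft * ‖zt - ye‖ := by
    have h := abs_le.mp (lip zt hzt ye hye)
    linarith only [h.2]
  set B := (2 * μ)⁻¹ * G⁻¹ ^ 2 * D ^ 2 * Lft * E with hBdef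
  clear_value B
  have hlower : ftStar ft gt Y xe - ft (xe, ye) ≤ B := by
    have h1 : Lft * ‖zt - ye‖ ≤ Lft * ((θ / G) * D) :=
      mul_le_mul_of_nonneg_left hztye hLft
    have hθK : θ ≤ (2 * μ * G)⁻¹ * D * E := hg
    have h2 : Lft * ((θ / G) * D) ≤ Lft * (((2 * μ * G)⁻¹ * D * E / G) * D) := by
      have hd : θ / G ≤ (2 * μ * G)⁻¹ * D * E / G := by
        exact div_le_div_of_nonneg_right hθK hG.le
      have : (θ / G) * D ≤ ((2 * μ * G)⁻¹ * D * E / G) * D :=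
        mul_le_mul_of_nonneg_right hd hD0
      exact mul_le_mul_of_nonneg_left this hLft
    have heq : Lft * (((2 * μ * G)⁻¹ * D * E / G) * D) = B := by
      rw [hBdef, mul_inv, div_eq_mul_inv]
      ring
    linarith only [h1, h2, heq, hstar_le, hlip2]
  have hBle : B ≤ max (ρ⁻¹ * (maxPc f ft gt Y ρ μ xe ye - fLow f X Y)) B :=
    le_max_right _ _
  have hAle : ρ⁻¹ * (maxPc f ft gt Y ρ μ xe ye - fLow f X Y) ≤
      max (ρ⁻¹ * (maxPc f ft gt Y ρ μ xe ye - fLow f X Y)) B := le_max_left _ _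
  rw [abs_le]
  constructor
  · linarith only [hlower, hBle]
  · linarith only [hupper, hAle]
end
end

section
/- Suppose the constrained bilevel problem attains its optimal value, i.e., there exist x* ∈ X and y* ∈ Y with g̃(x*,y*) ≤ 0 componentwise, f̃(x*,y*) = f̃*(x*), and f(x*,y*) = f*. Then for all ρ, μ > 0: (i) f_low ≤ inf_{(x,y)∈X×Y} sup_{z∈Y} P_{ρ,μ}(x,y,z) ≤ f* + ρ( f̃_hi − f̃_low ); and (ii) inf{ P_{ρ,μ}(x,y,z) : (x,y,z) ∈ X × Y × Y } ≥ f_low + ρ( f̃_low − f̃_hi ) − ρμ g̃_hi². -/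
noncomputable section

open Set

open scoped RealInnerProductSpace

lemma norm_posPart_le {l : ℕ} (v : En l) : ‖posPart v‖ ≤ ‖v‖ := by
  rw [EuclideanSpace.norm_eq, EuclideanSpace.norm_eq]
  apply Real.sqrt_le_sqrt
  apply Finset.sum_le_sum
  intro i _
  have h0 : 0 ≤ posPart v i := by show 0 ≤ max (v i) 0; exact le_max_right _ _
  have h1 : posPart v i ≤ |v i| := max_le (le_abs_self _) (abs_nonneg _)
  have : |posPart v i| ≤ |v i| := by rwa [abs_of_nonneg h0]
  calc ‖posPart v i‖ ^ 2 = |posPart v i| ^ 2 := by rw [Real.norm_eq_abs]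
    _ ≤ |v i| ^ 2 := by nlinarith [abs_nonneg (posPart v i), abs_nonneg (v i)]
    _ = ‖v i‖ ^ 2 := by rw [Real.norm_eq_abs]

theorem stmt17 {n m l : ℕ} (hn : 0 < n) (hm : 0 < m) (hl : 0 < l)
    (X : Set (En n)) (Y : Set (En m))
    (hXne : X.Nonempty) (hXcpt : IsCompact X)
    (hYne : Y.Nonempty) (hYcpt : IsCompact Y) (hYconv : Convex ℝ Y)
    (f ft : En n × En m → ℝ) (gt : En n × En m → En l)
    (hfc : ContinuousOn f (X ×ˢ Y)) (hftc : ContinuousOn ft (X ×ˢ Y))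
    (hgtc : ContinuousOn gt (X ×ˢ Y))
    (hftconv : ∀ x ∈ X, ConvexOn ℝ Y fun z => ft (x, z))
    (hgtconv : ∀ x ∈ X, ∀ i, ConvexOn ℝ Y fun z => gt (x, z) i)
    (hfeas : ∀ x ∈ X, ∃ z ∈ Y, ∀ i, gt (x, z) i ≤ 0)
    -- the constrained bilevel problem attains its optimal value
    (xstar : En n) (ystar : En m) (hxstar : xstar ∈ X) (hystar : ystar ∈ Y)
    (hfeasstar : ∀ i, gt (xstar, ystar) i ≤ 0)
    (hopt1 : ft (xstar, ystar) = ftStar ft gt Y xstar)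
    (hopt2 : f (xstar, ystar) = fStarC f ft gt X Y) :
    ∀ ρ > (0 : ℝ), ∀ μ > (0 : ℝ),
      (fLow f X Y ≤ minimaxValc f ft gt X Y ρ μ ∧
        minimaxValc f ft gt X Y ρ μ ≤
          fStarC f ft gt X Y + ρ * (ftHi ft X Y - ftLow ft X Y)) ∧
      fLow f X Y + ρ * (ftLow ft X Y - ftHi ft X Y) - ρ * μ * gtHi gt X Y ^ 2 ≤
        sInf {v | ∃ x ∈ X, ∃ y ∈ Y, ∃ z ∈ Y, v = Prhomu f ft gt ρ μ x y z} := by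
  intro ρ hρ μ hμ
  have hXYcpt : IsCompact (X ×ˢ Y) := hXcpt.prod hYcpt
  -- set identifications
  have hSf : {v | ∃ x ∈ X, ∃ y ∈ Y, v = f (x, y)} = f '' (X ×ˢ Y) := by
    ext v; constructor
    · rintro ⟨x, hx, y, hy, rfl⟩; exact ⟨(x, y), ⟨hx, hy⟩, rfl⟩
    · rintro ⟨⟨x, y⟩, ⟨hx, hy⟩, rfl⟩; exact ⟨x, hx, y, hy, rfl⟩
  have hSft : {v | ∃ x ∈ X, ∃ y ∈ Y, v = ft (x, y)} = ft '' (X ×ˢ Y) := by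
    ext v; constructor
    · rintro ⟨x, hx, y, hy, rfl⟩; exact ⟨(x, y), ⟨hx, hy⟩, rfl⟩
    · rintro ⟨⟨x, y⟩, ⟨hx, hy⟩, rfl⟩; exact ⟨x, hx, y, hy, rfl⟩
  have hSgt : {v | ∃ x ∈ X, ∃ y ∈ Y, v = ‖gt (x, y)‖} = (fun p => ‖gt p‖) '' (X ×ˢ Y) := by
    ext v; constructor
    · rintro ⟨x, hx, y, hy, rfl⟩; exact ⟨(x, y), ⟨hx, hy⟩, rfl⟩
    · rintro ⟨⟨x, y⟩, ⟨hx, hy⟩, rfl⟩; exact ⟨x, hx, y, hy, rfl⟩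
  have hfbdd : BddBelow {v | ∃ x ∈ X, ∃ y ∈ Y, v = f (x, y)} := by
    rw [hSf]; exact (hXYcpt.image_of_continuousOn hfc).bddBelow
  have hftbddB : BddBelow {v | ∃ x ∈ X, ∃ y ∈ Y, v = ft (x, y)} := by
    rw [hSft]; exact (hXYcpt.image_of_continuousOn hftc).bddBelow
  have hftbddA : BddAbove {v | ∃ x ∈ X, ∃ y ∈ Y, v = ft (x, y)} := by
    rw [hSft]; exact (hXYcpt.image_of_continuousOn hftc).bddAbove
  have hgtbddA : BddAbove {v | ∃ x ∈ X, ∃ y ∈ Y, v = ‖gt (x, y)‖} := by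
    rw [hSgt]
    exact (hXYcpt.image_of_continuousOn (continuous_norm.comp_continuousOn hgtc)).bddAbove
  -- pointwise bounds
  have hfLow : ∀ x ∈ X, ∀ y ∈ Y, fLow f X Y ≤ f (x, y) := fun x hx y hy =>
    csInf_le hfbdd ⟨x, hx, y, hy, rfl⟩
  have hftLow : ∀ x ∈ X, ∀ y ∈ Y, ftLow ft X Y ≤ ft (x, y) := fun x hx y hy =>
    csInf_le hftbddB ⟨x, hx, y, hy, rfl⟩
  have hftHi : ∀ x ∈ X, ∀ y ∈ Y, ft (x, y) ≤ ftHi ft X Y := fun x hx y hy =>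
    le_csSup hftbddA ⟨x, hx, y, hy, rfl⟩
  have hgtHi : ∀ x ∈ X, ∀ y ∈ Y, ‖gt (x, y)‖ ≤ gtHi gt X Y := fun x hx y hy =>
    le_csSup hgtbddA ⟨x, hx, y, hy, rfl⟩
  have hgtHi0 : 0 ≤ gtHi gt X Y :=
    le_trans (norm_nonneg _) (hgtHi xstar hxstar ystar hystar)
  have hposbd : ∀ x ∈ X, ∀ y ∈ Y, ‖posPart (gt (x, y))‖ ^ 2 ≤ gtHi gt X Y ^ 2 := by
    intro x hx y hy
    have h1 : ‖posPart (gt (x, y))‖ ≤ gtHi gt X Y :=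
      (norm_posPart_le _).trans (hgtHi x hx y hy)
    exact pow_le_pow_left₀ (norm_nonneg _) h1 2
  have hPtLow : ∀ x ∈ X, ∀ z ∈ Y, ftLow ft X Y ≤ Ptilde ft gt μ x z := by
    intro x hx z hz
    have := hftLow x hx z hz
    have h2 : 0 ≤ μ * ‖posPart (gt (x, z))‖ ^ 2 := by positivity
    unfold Ptilde; linarith
  have hPtHi : ∀ x ∈ X, ∀ z ∈ Y, Ptilde ft gt μ x z ≤ ftHi ft X Y + μ * gtHi gt X Y ^ 2 := by
    intro x hx z hz
    have h1 := hftHi x hx z hz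
    have h2 := hposbd x hx z hz
    unfold Ptilde; nlinarith
  -- inner sup set facts
  have hZbddA : ∀ x ∈ X, ∀ y ∈ Y, BddAbove {v | ∃ z ∈ Y, v = Prhomu f ft gt ρ μ x y z} := by
    intro x hx y hy
    refine ⟨f (x, y) + ρ * (Ptilde ft gt μ x y - ftLow ft X Y), ?_⟩
    rintro v ⟨z, hz, rfl⟩
    have := hPtLow x hx z hz
    unfold Prhomu; nlinarith
  have hself : ∀ x ∈ X, ∀ y ∈ Y, Prhomu f ft gt ρ μ x y y = f (x, y) := by
    intro x hx y hy; unfold Prhomu; ring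
  have hmaxge : ∀ x ∈ X, ∀ y ∈ Y, f (x, y) ≤ maxPc f ft gt Y ρ μ x y := by
    intro x hx y hy
    have : f (x, y) ∈ {v | ∃ z ∈ Y, v = Prhomu f ft gt ρ μ x y z} :=
      ⟨y, hy, (hself x hx y hy).symm⟩
    exact le_csSup (hZbddA x hx y hy) this
  -- minimax set facts
  have hMMbdd : BddBelow {v | ∃ x ∈ X, ∃ y ∈ Y, v = maxPc f ft gt Y ρ μ x y} := by
    refine ⟨fLow f X Y, ?_⟩
    rintro v ⟨x, hx, y, hy, rfl⟩
    exact le_trans (hfLow x hx y hy) (hmaxge x hx y hy)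
  have hMMne : {v | ∃ x ∈ X, ∃ y ∈ Y, v = maxPc f ft gt Y ρ μ x y}.Nonempty :=
    ⟨_, xstar, hxstar, ystar, hystar, rfl⟩
  constructor
  · constructor
    · refine le_csInf hMMne ?_
      rintro v ⟨x, hx, y, hy, rfl⟩
      exact le_trans (hfLow x hx y hy) (hmaxge x hx y hy)
    · have hPtstar : Ptilde ft gt μ xstar ystar = ft (xstar, ystar) := by
        have hz : posPart (gt (xstar, ystar)) = 0 := by
          ext i
          show max (gt (xstar, ystar) i) 0 = (0 : En l) i
          simp [max_eq_right (hfeasstar i)]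
        unfold Ptilde; rw [hz]; simp
      have hmaxle : maxPc f ft gt Y ρ μ xstar ystar ≤
          fStarC f ft gt X Y + ρ * (ftHi ft X Y - ftLow ft X Y) := by
        refine csSup_le ⟨_, ystar, hystar, rfl⟩ ?_
        rintro v ⟨z, hz, rfl⟩
        have h1 := hPtLow xstar hxstar z hz
        have h2 := hftHi xstar hxstar ystar hystar
        rw [← hopt2]
        unfold Prhomu; rw [hPtstar]; nlinarith
      exact le_trans (csInf_le hMMbdd ⟨xstar, hxstar, ystar, hystar, rfl⟩) hmaxle
  · refine le_csInf ⟨_, xstar, hxstar, ystar, hystar, ystar, hystar, rfl⟩ ?_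
    rintro v ⟨x, hx, y, hy, z, hz, rfl⟩
    have h1 := hfLow x hx y hy
    have h2 := hftLow x hx y hy
    have h3 := hftHi x hx z hz
    have h4 := hposbd x hx z hz
    have h5 : 0 ≤ μ * ‖posPart (gt (x, y))‖ ^ 2 := by positivity
    unfold Prhomu Ptilde
    nlinarith [mul_le_mul_of_nonneg_left h2 hρ.le, mul_le_mul_of_nonneg_left h3 hρ.le,
      mul_le_mul_of_nonneg_left h4 (mul_nonneg hρ.le hμ.le), mul_nonneg hρ.le h5]
end
end
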